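/- Let G be a trimmable class of graphs with G^{δ≥2} nonempty, let A be the class of graphs H such that for every graph G disjoint from H: G ∈ G ⇔ G ∪ H ∈ G (graphs addable and removable in G), and let B be the analogous class for G^{δ≥2}. Then B = A^{δ≥2}, i.e., B equals the class of graphs in A with minimum degree at least 2. -/
import Mathlib


attribute [local instance] Classical.propDecidable

/-- The disjoint union of two graphs. -/
def sumGraph {V W : Type} (G : SimpleGraph V) (H : SimpleGraph W) :
    SimpleGraph (V ⊕ W) :=
  SimpleGraph.fromRel (fun x y =>
    (∃ a b, x = Sum.inl a ∧ y = Sum.inl b ∧ G.Adj a b) ∨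
    (∃ a b, x = Sum.inr a ∧ y = Sum.inr b ∧ H.Adj a b))

/-- `G` has minimum degree at least 2. -/
def MinDeg2 {V : Type} (G : SimpleGraph V) : Prop :=
  ∀ v : V, 2 ≤ Set.ncard (G.neighborSet v)

/-- The vertex set of the 2-core of `G`. -/
def coreSet {V : Type} (G : SimpleGraph V) : Set V :=
  {v | ∃ W : Set V, v ∈ W ∧ ∀ u ∈ W, 2 ≤ Set.ncard {w | w ∈ W ∧ G.Adj u w}}

/-- `𝒢` is trimmable: a graph is in `𝒢` iff its 2-core is. -/
def Trimmable (𝒢 : ∀ ⦃V : Type⦄ [Fintype V], SimpleGraph V → Prop) : Prop :=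
  ∀ (V : Type) [Fintype V] (G : SimpleGraph V), 𝒢 G ↔ 𝒢 (G.induce (coreSet G))

/-- `H` is addable and removable in `𝒞`: for every graph `G`,
`G ∈ 𝒞 ↔ G ∪ H ∈ 𝒞` (disjoint union). -/
def AddRem (𝒞 : ∀ ⦃V : Type⦄ [Fintype V], SimpleGraph V → Prop)
    {W : Type} [Fintype W] (H : SimpleGraph W) : Prop :=
  ∀ (V : Type) [Fintype V] (G : SimpleGraph V), 𝒞 G ↔ 𝒞 (sumGraph G H)

lemma sumGraph_adj_inl {V W : Type} (G : SimpleGraph V) (H : SimpleGraph W) (a b : V) :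
    (sumGraph G H).Adj (Sum.inl a) (Sum.inl b) ↔ G.Adj a b := by
  simp only [sumGraph, SimpleGraph.fromRel_adj, ne_eq, Sum.inl.injEq]
  constructor
  · rintro ⟨hne, h | h⟩ <;> rcases h with (⟨x,y,hx,hy,hadj⟩|⟨x,y,hx,hy,hadj⟩) <;>
      simp_all <;> exact hadj.symm
  · intro h
    exact ⟨h.ne, Or.inl (Or.inl ⟨a, b, rfl, rfl, h⟩)⟩

lemma sumGraph_adj_inr {V W : Type} (G : SimpleGraph V) (H : SimpleGraph W) (a b : W) :
    (sumGraph G H).Adj (Sum.inr a) (Sum.inr b) ↔ H.Adj a b := by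
  simp only [sumGraph, SimpleGraph.fromRel_adj, ne_eq, Sum.inr.injEq]
  constructor
  · rintro ⟨hne, h | h⟩ <;> rcases h with (⟨x,y,hx,hy,hadj⟩|⟨x,y,hx,hy,hadj⟩) <;>
      simp_all <;> exact hadj.symm
  · intro h
    exact ⟨h.ne, Or.inl (Or.inr ⟨a, b, rfl, rfl, h⟩)⟩

lemma sumGraph_not_adj_mixed {V W : Type} (G : SimpleGraph V) (H : SimpleGraph W) (a : V) (b : W) :
    ¬ (sumGraph G H).Adj (Sum.inl a) (Sum.inr b) := by
  simp only [sumGraph, SimpleGraph.fromRel_adj, ne_eq]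
  rintro ⟨hne, h | h⟩ <;> rcases h with (⟨x,y,hx,hy,hadj⟩|⟨x,y,hx,hy,hadj⟩) <;> simp_all

lemma sumGraph_neighborSet_inl {V W : Type} (G : SimpleGraph V) (H : SimpleGraph W) (a : V) :
    (sumGraph G H).neighborSet (Sum.inl a) = Sum.inl '' G.neighborSet a := by
  ext x
  cases x with
  | inl v => simp [SimpleGraph.neighborSet, sumGraph_adj_inl]
  | inr w => simp [SimpleGraph.neighborSet, sumGraph_not_adj_mixed]

lemma sumGraph_neighborSet_inr {V W : Type} (G : SimpleGraph V) (H : SimpleGraph W) (b : W) :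
    (sumGraph G H).neighborSet (Sum.inr b) = Sum.inr '' H.neighborSet b := by
  ext x
  cases x with
  | inl v =>
    simp only [SimpleGraph.mem_neighborSet, Set.mem_image]
    constructor
    · intro h; exact absurd h.symm (sumGraph_not_adj_mixed G H v b)
    · rintro ⟨y, _, hy⟩; simp at hy
  | inr w => simp [SimpleGraph.neighborSet, sumGraph_adj_inr]

lemma minDeg2_sumGraph {V W : Type} {G : SimpleGraph V} {H : SimpleGraph W} :
    MinDeg2 (sumGraph G H) ↔ MinDeg2 G ∧ MinDeg2 H := by
  constructor
  · intro h
    constructor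
    · intro v
      have := h (Sum.inl v)
      rwa [sumGraph_neighborSet_inl, Set.ncard_image_of_injective _ Sum.inl_injective] at this
    · intro w
      have := h (Sum.inr w)
      rwa [sumGraph_neighborSet_inr, Set.ncard_image_of_injective _ Sum.inr_injective] at this
  · rintro ⟨hG, hH⟩ x
    cases x with
    | inl v =>
      rw [sumGraph_neighborSet_inl, Set.ncard_image_of_injective _ Sum.inl_injective]
      exact hG v
    | inr w =>
      rw [sumGraph_neighborSet_inr, Set.ncard_image_of_injective _ Sum.inr_injective]
      exact hH w

lemma subset_coreSet {V : Type} {G : SimpleGraph V} {S : Set V}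
    (hS : ∀ u ∈ S, 2 ≤ Set.ncard {w | w ∈ S ∧ G.Adj u w}) : S ⊆ coreSet G :=
  fun v hv => ⟨S, hv, hS⟩

lemma minDeg2_core {V : Type} [Fintype V] (G : SimpleGraph V) :
    MinDeg2 (G.induce (coreSet G)) := by
  rintro ⟨v, hv⟩
  obtain ⟨S, hvS, hS⟩ := hv
  have hsub : S ⊆ coreSet G := subset_coreSet hS
  have key : Subtype.val '' ((G.induce (coreSet G)).neighborSet ⟨v, hsub hvS⟩)
      = {w | w ∈ coreSet G ∧ G.Adj v w} := by
    ext w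
    simp only [Set.mem_image, SimpleGraph.mem_neighborSet, Set.mem_setOf_eq]
    constructor
    · rintro ⟨⟨u, hu⟩, hadj, rfl⟩
      exact ⟨hu, hadj⟩
    · rintro ⟨hw, hadj⟩
      exact ⟨⟨w, hw⟩, hadj, rfl⟩
  have h1 : {w | w ∈ S ∧ G.Adj v w} ⊆ {w | w ∈ coreSet G ∧ G.Adj v w} :=
    fun w ⟨h1, h2⟩ => ⟨hsub h1, h2⟩
  calc 2 ≤ Set.ncard {w | w ∈ S ∧ G.Adj v w} := hS v hvS
    _ ≤ Set.ncard {w | w ∈ coreSet G ∧ G.Adj v w} := Set.ncard_le_ncard h1 (Set.toFinite _)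
    _ = Set.ncard ((G.induce (coreSet G)).neighborSet ⟨v, hsub hvS⟩) := by
        rw [← key, Set.ncard_image_of_injective _ Subtype.val_injective]

lemma coreSet_sumGraph {V W : Type} (G : SimpleGraph V) {H : SimpleGraph W}
    (hH : MinDeg2 H) :
    coreSet (sumGraph G H) = Sum.inl '' coreSet G ∪ Set.range Sum.inr := by
  apply Set.Subset.antisymm
  · rintro x ⟨S, hxS, hS⟩
    cases x with
    | inr w => exact Or.inr ⟨w, rfl⟩
    | inl v =>
      refine Or.inl ⟨v, ?_, rfl⟩
      set S' : Set V := {u | Sum.inl u ∈ S} with hS'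
      refine ⟨S', hxS, fun u hu => ?_⟩
      have := hS (Sum.inl u) hu
      have himg : Sum.inl '' {w | w ∈ S' ∧ G.Adj u w}
          = {w | w ∈ S ∧ (sumGraph G H).Adj (Sum.inl u) w} := by
        ext y
        cases y with
        | inl z => simp [S', sumGraph_adj_inl]
        | inr z => simp [sumGraph_not_adj_mixed]
      calc 2 ≤ Set.ncard {w | w ∈ S ∧ (sumGraph G H).Adj (Sum.inl u) w} := this
        _ = Set.ncard (Sum.inl '' {w | w ∈ S' ∧ G.Adj u w}) := by rw [himg]
        _ = Set.ncard {w | w ∈ S' ∧ G.Adj u w} :=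
            Set.ncard_image_of_injective _ Sum.inl_injective
  · rintro x (⟨v, hv, rfl⟩ | ⟨w, rfl⟩)
    · obtain ⟨S, hvS, hS⟩ := hv
      refine ⟨Sum.inl '' S, ⟨v, hvS, rfl⟩, ?_⟩
      rintro u ⟨a, haS, rfl⟩
      have himg : Sum.inl '' {w | w ∈ S ∧ G.Adj a w}
          = {w | w ∈ Sum.inl '' S ∧ (sumGraph G H).Adj (Sum.inl a) w} := by
        ext y
        cases y with
        | inl z => simp [sumGraph_adj_inl]
        | inr z => simp [sumGraph_not_adj_mixed]
      calc 2 ≤ Set.ncard {w | w ∈ S ∧ G.Adj a w} := hS a haS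
        _ = Set.ncard (Sum.inl '' {w | w ∈ S ∧ G.Adj a w}) :=
            (Set.ncard_image_of_injective _ Sum.inl_injective).symm
        _ = _ := by rw [himg]
    · refine ⟨Set.range Sum.inr, ⟨w, rfl⟩, ?_⟩
      rintro u ⟨b, rfl⟩
      have himg : Sum.inr '' (H.neighborSet b)
          = {w | w ∈ Set.range (Sum.inr : W → V ⊕ W) ∧ (sumGraph G H).Adj (Sum.inr b) w} := by
        ext y
        cases y with
        | inl z =>
          simp only [Set.mem_image, Set.mem_setOf_eq, Set.mem_range]
          constructor
          · rintro ⟨z', _, h⟩; simp at h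
          · rintro ⟨⟨z', h⟩, _⟩; simp at h
        | inr z => simp [sumGraph_adj_inr]
      calc 2 ≤ Set.ncard (H.neighborSet b) := hH b
        _ = Set.ncard (Sum.inr '' H.neighborSet b) :=
            (Set.ncard_image_of_injective _ Sum.inr_injective).symm
        _ = _ := by rw [himg]

def coreSumEquiv {V W : Type} (S : Set V) :
    ↥(Sum.inl '' S ∪ Set.range (Sum.inr : W → V ⊕ W)) ≃ ↥S ⊕ W where
  toFun x :=
    match x with
    | ⟨Sum.inl v, h⟩ => Sum.inl ⟨v, by
        rcases h with ⟨a, ha, hav⟩ | ⟨b, hb⟩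
        · rw [Sum.inl.injEq] at hav; exact hav ▸ ha
        · exact absurd hb (by simp)⟩
    | ⟨Sum.inr w, _⟩ => Sum.inr w
  invFun y :=
    match y with
    | Sum.inl ⟨v, h⟩ => ⟨Sum.inl v, Or.inl ⟨v, h, rfl⟩⟩
    | Sum.inr w => ⟨Sum.inr w, Or.inr ⟨w, rfl⟩⟩
  left_inv := by rintro ⟨x | x, h⟩ <;> rfl
  right_inv := by rintro (⟨v, h⟩ | w) <;> rfl

lemma mem_left_of_inl {V W : Type} {S : Set V} {a : V}
    (h : Sum.inl a ∈ Sum.inl '' S ∪ Set.range (Sum.inr : W → V ⊕ W)) : a ∈ S := by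
  rcases h with ⟨b, hb, hba⟩ | ⟨b, hb⟩
  · rw [Sum.inl.injEq] at hba; exact hba ▸ hb
  · exact absurd hb (by simp)

lemma coreSumEquiv_inl {V W : Type} (S : Set V) (a : V)
    (h : Sum.inl a ∈ Sum.inl '' S ∪ Set.range (Sum.inr : W → V ⊕ W)) (ha : a ∈ S) :
    coreSumEquiv S ⟨Sum.inl a, h⟩ = Sum.inl ⟨a, ha⟩ := rfl

lemma coreSumEquiv_inr {V W : Type} (S : Set V) (b : W)
    (h : Sum.inr b ∈ Sum.inl '' S ∪ Set.range (Sum.inr : W → V ⊕ W)) :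
    coreSumEquiv S ⟨Sum.inr b, h⟩ = Sum.inr b := rfl

def coreSumIso {V W : Type} (G : SimpleGraph V) (H : SimpleGraph W) (S : Set V) :
    ((sumGraph G H).induce (Sum.inl '' S ∪ Set.range Sum.inr)) ≃g
      sumGraph (G.induce S) H where
  toEquiv := coreSumEquiv S
  map_rel_iff' := by
    rintro ⟨x, hx⟩ ⟨y, hy⟩
    show (sumGraph (G.induce S) H).Adj (coreSumEquiv S ⟨x, hx⟩) (coreSumEquiv S ⟨y, hy⟩) ↔
      (sumGraph G H).Adj x y
    cases x with
    | inl a =>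
      have ha : a ∈ S := mem_left_of_inl hx
      cases y with
      | inl b =>
        have hb : b ∈ S := mem_left_of_inl hy
        rw [coreSumEquiv_inl S a hx ha, coreSumEquiv_inl S b hy hb,
          sumGraph_adj_inl, sumGraph_adj_inl]
        exact Iff.rfl
      | inr b =>
        rw [coreSumEquiv_inl S a hx ha, coreSumEquiv_inr S b hy]
        exact iff_of_false (sumGraph_not_adj_mixed _ _ _ _) (sumGraph_not_adj_mixed _ _ _ _)
    | inr a =>
      cases y with
      | inl b =>
        have hb : b ∈ S := mem_left_of_inl hy
        rw [coreSumEquiv_inr S a hx, coreSumEquiv_inl S b hy hb]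
        exact iff_of_false (fun h => sumGraph_not_adj_mixed _ _ _ _ h.symm)
          (fun h => sumGraph_not_adj_mixed _ _ _ _ h.symm)
      | inr b =>
        rw [coreSumEquiv_inr S a hx, coreSumEquiv_inr S b hy,
          sumGraph_adj_inr, sumGraph_adj_inr]

/-- Let `𝒢` be a trimmable class (closed under isomorphism) with
`𝒢^{δ≥2}` containing a non-null graph, `𝒜` the class of graphs addable and
removable in `𝒢`, and `ℬ` the class of graphs addable and removable in `𝒢^{δ≥2}`.
Then `ℬ = 𝒜^{δ≥2}`. -/
theorem stmt_17 (𝒢 : ∀ ⦃V : Type⦄ [Fintype V], SimpleGraph V → Prop)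
    (hiso : ∀ (V W : Type) [Fintype V] [Fintype W] (G : SimpleGraph V)
      (H : SimpleGraph W), Nonempty (G ≃g H) → 𝒢 G → 𝒢 H)
    (htrim : Trimmable 𝒢)
    (hne : ∃ (n : ℕ) (G : SimpleGraph (Fin n)), 0 < n ∧ 𝒢 G ∧ MinDeg2 G)
    (W : Type) [Fintype W] (H : SimpleGraph W) :
    AddRem (fun {V : Type} [Fintype V] (G : SimpleGraph V) => 𝒢 G ∧ MinDeg2 G) H ↔
      (AddRem 𝒢 H ∧ MinDeg2 H) := by
  constructor
  · intro hB
    have hH2 : MinDeg2 H := by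
      obtain ⟨n, G₀, _, hG₀, hG₀2⟩ := hne
      have h := (hB (Fin n) G₀).mp ⟨hG₀, hG₀2⟩
      exact (minDeg2_sumGraph.mp h.2).2
    refine ⟨?_, hH2⟩
    intro V _ G
    set K := G.induce (coreSet G) with hK
    have h1 : 𝒢 G ↔ 𝒢 K := htrim V G
    have hcore2 : MinDeg2 K := minDeg2_core G
    have h2 := hB (↥(coreSet G)) K
    have h3 : 𝒢 (sumGraph G H) ↔
        𝒢 ((sumGraph G H).induce (coreSet (sumGraph G H))) := htrim _ _
    have hiso1 : Nonempty (((sumGraph G H).induce (coreSet (sumGraph G H))) ≃g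
        sumGraph K H) := by
      rw [coreSet_sumGraph G hH2]
      exact ⟨coreSumIso G H (coreSet G)⟩
    have h4 : 𝒢 ((sumGraph G H).induce (coreSet (sumGraph G H))) ↔
        𝒢 (sumGraph K H) :=
      ⟨hiso _ _ _ _ hiso1, hiso _ _ _ _ ⟨hiso1.some.symm⟩⟩
    calc 𝒢 G ↔ 𝒢 K := h1
      _ ↔ (𝒢 K ∧ MinDeg2 K) := ⟨fun h => ⟨h, hcore2⟩, And.left⟩
      _ ↔ (𝒢 (sumGraph K H) ∧ MinDeg2 (sumGraph K H)) := h2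
      _ ↔ 𝒢 (sumGraph K H) :=
          ⟨And.left, fun h => ⟨h, minDeg2_sumGraph.mpr ⟨hcore2, hH2⟩⟩⟩
      _ ↔ 𝒢 ((sumGraph G H).induce (coreSet (sumGraph G H))) := h4.symm
      _ ↔ 𝒢 (sumGraph G H) := h3.symm
  · rintro ⟨hA, hH2⟩ V _ G
    constructor
    · rintro ⟨hG, hG2⟩
      exact ⟨(hA V G).mp hG, minDeg2_sumGraph.mpr ⟨hG2, hH2⟩⟩
    · rintro ⟨hG, hG2⟩
      exact ⟨(hA V G).mpr hG, (minDeg2_sumGraph.mp hG2).1⟩
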